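/- Let A be a graded polynomial algebra over a field k with A_0 = k, and let M be a finitely generated free graded A-module of rank r. If g_1,...,g_r are homogeneous A-linearly independent elements of M, then the sum of the degrees deg(g_1)+...+deg(g_r) is at least the sum of the degrees of any homogeneous free generating set of M, with equality if and only if g_1,...,g_r generate M (freely) over A. -/

import Mathlib

noncomputable def homProj {k N : Type*} [Semiring k] [AddCommMonoid N] [Module k N]
    (𝒩 : ℕ → Submodule k N) [DirectSum.Decomposition 𝒩] (n : ℕ) : N →ₗ[k] N :=
  (𝒩 n).subtype ∘ₗ (DirectSum.component k ℕ (fun i => 𝒩 i) n) ∘ₗ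
    (DirectSum.decomposeLinearEquiv 𝒩 : N →ₗ[k] _)

theorem homProj_apply {k N : Type*} [Semiring k] [AddCommMonoid N] [Module k N]
    (𝒩 : ℕ → Submodule k N) [DirectSum.Decomposition 𝒩] (n : ℕ) (x : N) :
    homProj 𝒩 n x = (DirectSum.decompose 𝒩 x n : N) := rfl

theorem homProj_same {k N : Type*} [Semiring k] [AddCommMonoid N] [Module k N]
    (𝒩 : ℕ → Submodule k N) [DirectSum.Decomposition 𝒩] {n : ℕ} {x : N} (hx : x ∈ 𝒩 n) :
    homProj 𝒩 n x = x := by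
  rw [homProj_apply, DirectSum.decompose_of_mem_same 𝒩 hx]

theorem homProj_ne {k N : Type*} [Semiring k] [AddCommMonoid N] [Module k N]
    (𝒩 : ℕ → Submodule k N) [DirectSum.Decomposition 𝒩] {m n : ℕ} {x : N} (hx : x ∈ 𝒩 m)
    (h : m ≠ n) : homProj 𝒩 n x = 0 := by
  rw [homProj_apply, DirectSum.decompose_of_mem_ne 𝒩 hx h]

theorem degree_sum_test_for_free_generation
    {k A M : Type*} [Field k] [CommRing A] [IsDomain A] [Algebra k A]
    (𝒜 : ℕ → Submodule k A) [GradedAlgebra 𝒜]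
    -- `A₀ = k`:
    (h0 : ∀ a ∈ 𝒜 0, ∃ c : k, a = algebraMap k A c)
    -- `A` is a polynomial algebra:
    (hpoly : ∃ m : ℕ, Nonempty (A ≃ₐ[k] MvPolynomial (Fin m) k))
    [AddCommGroup M] [Module A M] [Module k M] [IsScalarTower k A M]
    -- a grading on `M` compatible with that of `A`:
    (ℳ : ℕ → Submodule k M) (hdecomp : DirectSum.IsInternal ℳ)
    (hsmul : ∀ i j : ℕ, ∀ a ∈ 𝒜 i, ∀ m ∈ ℳ j, a • m ∈ ℳ (i + j))
    (r : ℕ)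
    -- a homogeneous basis `f` of `M` with degrees `df`:
    (f : Module.Basis (Fin r) A M) (df : Fin r → ℕ) (hf : ∀ i, f i ∈ ℳ (df i))
    -- homogeneous `A`-independent elements `g` of degrees `dg`:
    (g : Fin r → M) (dg : Fin r → ℕ) (hg : ∀ i, g i ∈ ℳ (dg i)) (hg0 : ∀ i, g i ≠ 0)
    (hind : LinearIndependent A g) :
    (∑ i, df i) ≤ (∑ i, dg i) ∧
      ((∑ i, dg i) = (∑ i, df i) ↔ Submodule.span A (Set.range g) = ⊤) := by
  classical
  letI : DirectSum.Decomposition ℳ := hdecomp.chooseDecomposition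
  set C : Matrix (Fin r) (Fin r) A := f.toMatrix g with hCdef
  have hC : ∀ j, ∑ i, C i j • f i = g j := by
    intro j; exact f.sum_toMatrix_smul_self g j
  -- key homogeneity of entries of C
  have hkey : ∀ j i, C i j =
      if df i ≤ dg j then ((DirectSum.decompose 𝒜 (C i j) (dg j - df i) : A)) else 0 := by
    intro j
    set D : Fin r → A := fun i =>
      if df i ≤ dg j then ((DirectSum.decompose 𝒜 (C i j) (dg j - df i) : A)) else 0 with hD
    have hterm : ∀ i, homProj ℳ (dg j) (C i j • f i) = D i • f i := by
      intro i
      have hrep : C i j • f i = ∑ n ∈ (DirectSum.decompose 𝒜 (C i j)).support,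
          (DirectSum.decompose 𝒜 (C i j) n : A) • f i := by
        rw [← Finset.sum_smul, DirectSum.sum_support_decompose]
      rw [hrep, map_sum]
      have step : ∀ n ∈ (DirectSum.decompose 𝒜 (C i j)).support,
          homProj ℳ (dg j) ((DirectSum.decompose 𝒜 (C i j) n : A) • f i) =
            if n + df i = dg j then (DirectSum.decompose 𝒜 (C i j) n : A) • f i else 0 := by
        intro n _
        have hmem : (DirectSum.decompose 𝒜 (C i j) n : A) • f i ∈ ℳ (n + df i) :=
          hsmul n (df i) _ (DirectSum.decompose 𝒜 (C i j) n).2 _ (hf i)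
        by_cases h : n + df i = dg j
        · rw [if_pos h]; exact homProj_same ℳ (h ▸ hmem)
        · rw [if_neg h]; exact homProj_ne ℳ hmem h
      rw [Finset.sum_congr rfl step]
      by_cases hle : df i ≤ dg j
      · have hiff : ∀ n, (n + df i = dg j) ↔ n = dg j - df i := by omega
        have : ∀ n ∈ (DirectSum.decompose 𝒜 (C i j)).support,
            (if n + df i = dg j then (DirectSum.decompose 𝒜 (C i j) n : A) • f i else 0) =
            (if n = dg j - df i then (DirectSum.decompose 𝒜 (C i j) n : A) • f i else 0) :=
          fun n _ => if_congr (hiff n) rfl rfl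
        rw [Finset.sum_congr rfl this, Finset.sum_ite_eq']
        simp only [hD, if_pos hle]
        split_ifs with h
        · rfl
        · rw [DFinsupp.notMem_support_iff.mp h]
          simp
      · have : ∀ n ∈ (DirectSum.decompose 𝒜 (C i j)).support,
            (if n + df i = dg j then (DirectSum.decompose 𝒜 (C i j) n : A) • f i else 0) = 0 :=
          fun n _ => if_neg (by omega)
        rw [Finset.sum_congr rfl this, Finset.sum_const, smul_zero]
        simp [hD, hle]
    have hsum : ∑ i, D i • f i = g j := by
      calc ∑ i, D i • f i = ∑ i, homProj ℳ (dg j) (C i j • f i) :=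
            (Finset.sum_congr rfl fun i _ => (hterm i).symm)
        _ = homProj ℳ (dg j) (∑ i, C i j • f i) := (map_sum _ _ _).symm
        _ = homProj ℳ (dg j) (g j) := by rw [hC]
        _ = g j := homProj_same ℳ (hg j)
    -- uniqueness of basis representation
    intro i
    have hzero : ∑ i, (C i j - D i) • f i = 0 := by
      simp_rw [sub_smul, Finset.sum_sub_distrib, hC j, hsum, sub_self]
    have := Fintype.linearIndependent_iff.mp f.linearIndependent (fun i => C i j - D i) hzero i
    have := sub_eq_zero.mp this
    simpa [hD] using this
  -- `det C ≠ 0` from linear independence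
  have hdet0 : C.det ≠ 0 := by
    intro h
    obtain ⟨v, hv, hmv⟩ := Matrix.exists_mulVec_eq_zero_iff.mpr h
    apply hv
    refine funext (Fintype.linearIndependent_iff.mp hind v ?_)
    calc ∑ j, v j • g j = ∑ j, ∑ i, v j • (C i j • f i) := by
          simp_rw [← hC, Finset.smul_sum]
      _ = ∑ i, ((C.mulVec v) i) • f i := by
          rw [Finset.sum_comm]
          refine Finset.sum_congr rfl fun i _ => ?_
          rw [Matrix.mulVec, dotProduct, Finset.sum_smul]
          exact Finset.sum_congr rfl fun l _ => by rw [smul_smul, mul_comm]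
      _ = 0 := by rw [hmv]; simp
  -- homogeneity of the determinant
  have hdetmem : (∑ i, df i) ≤ (∑ i, dg i) →
      C.det ∈ 𝒜 ((∑ i, dg i) - (∑ i, df i)) := by
    intro hle
    rw [Matrix.det_apply]
    refine Submodule.sum_mem _ fun σ _ => ?_
    by_cases hall : ∀ j, df (σ j) ≤ dg j
    · rw [Units.smul_def]
      refine zsmul_mem ?_ _
      have hprod : ∏ j, C (σ j) j ∈ 𝒜 (∑ j, (dg j - df (σ j))) := by
        refine SetLike.prod_mem_graded 𝒜 _ _ fun j _ => ?_
        rw [hkey j (σ j), if_pos (hall j)]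
        exact (DirectSum.decompose 𝒜 (C (σ j) j) (dg j - df (σ j))).2
      have hdeg : ∑ j, (dg j - df (σ j)) = (∑ j, dg j) - (∑ j, df j) := by
        have h1 : ∑ j, df (σ j) = ∑ j, df j := Equiv.sum_comp σ df
        have h2 : ∑ j, ((dg j - df (σ j)) + df (σ j)) = ∑ j, dg j :=
          Finset.sum_congr rfl fun j _ => by rw [Nat.sub_add_cancel (hall j)]
        rw [Finset.sum_add_distrib] at h2
        omega
      rwa [hdeg] at hprod
    · push_neg at hall
      obtain ⟨j, hj⟩ := hall
      have hz : C (σ j) j = 0 := by rw [hkey j (σ j), if_neg (by omega)]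
      have hp : ∏ i, C (σ i) i = 0 := Finset.prod_eq_zero (Finset.mem_univ j) hz
      rw [hp, smul_zero]
      exact Submodule.zero_mem _
  -- part 1 : degree inequality
  have h1 : (∑ i, df i) ≤ (∑ i, dg i) := by
    by_contra hlt
    apply hdet0
    rw [Matrix.det_apply]
    refine Finset.sum_eq_zero fun σ _ => ?_
    have : ∃ j, ¬ df (σ j) ≤ dg j := by
      by_contra hall
      push_neg at hall
      have : ∑ j, df (σ j) ≤ ∑ j, dg j := Finset.sum_le_sum fun j _ => hall j
      rw [Equiv.sum_comp σ df] at this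
      omega
    obtain ⟨j, hj⟩ := this
    have hz : C (σ j) j = 0 := by rw [hkey j (σ j), if_neg hj]
    have hp : ∏ i, C (σ i) i = 0 := Finset.prod_eq_zero (Finset.mem_univ j) hz
    rw [hp, smul_zero]
  -- a homogeneous unit has degree 0
  have hunit_deg : ∀ d : ℕ, d ≠ 0 → ∀ a ∈ 𝒜 d, IsUnit a → False := by
    intro d hd a ha hu
    obtain ⟨u, rfl⟩ := hu
    have h1 : homProj 𝒜 0 ((u : A) * (↑u⁻¹ : A)) = 1 := by
      rw [Units.mul_inv]
      exact homProj_same 𝒜 SetLike.GradedOne.one_mem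
    have h2 : homProj 𝒜 0 ((u : A) * (↑u⁻¹ : A)) = 0 := by
      set b : A := (↑u⁻¹ : A) with hb
      have hrep : (u : A) * b = ∑ n ∈ (DirectSum.decompose 𝒜 b).support,
          (u : A) * (DirectSum.decompose 𝒜 b n : A) := by
        rw [← Finset.mul_sum, DirectSum.sum_support_decompose]
      rw [hrep, map_sum]
      refine Finset.sum_eq_zero fun n _ => ?_
      have hmem : (u : A) * (DirectSum.decompose 𝒜 b n : A) ∈ 𝒜 (d + n) :=
        SetLike.mul_mem_graded ha (DirectSum.decompose 𝒜 b n).2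
      exact homProj_ne 𝒜 hmem (by omega)
    rw [h1] at h2
    exact one_ne_zero h2
  refine ⟨h1, ?_, ?_⟩
  · -- equality → span = ⊤
    intro heq
    have hmem0 : C.det ∈ 𝒜 0 := by
      have := hdetmem h1
      rwa [heq, Nat.sub_self] at this
    obtain ⟨c, hc⟩ := h0 _ hmem0
    have hc0 : c ≠ 0 := by
      intro h
      apply hdet0
      rw [hc, h, map_zero]
    have hCu : IsUnit C.det := by
      rw [hc]
      exact (Ne.isUnit hc0).map (algebraMap k A)
    have hinv : C * C⁻¹ = 1 := Matrix.mul_nonsing_inv C hCu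
    have hfmem : ∀ i, f i ∈ Submodule.span A (Set.range g) := by
      intro i
      have hfi : ∑ j, C⁻¹ j i • g j = f i := by
        calc ∑ j, C⁻¹ j i • g j = ∑ j, ∑ l, C⁻¹ j i • (C l j • f l) := by
              simp_rw [← hC, Finset.smul_sum]
          _ = ∑ l, ((C * C⁻¹) l i) • f l := by
              rw [Finset.sum_comm]
              refine Finset.sum_congr rfl fun l _ => ?_
              rw [Matrix.mul_apply, Finset.sum_smul]
              exact Finset.sum_congr rfl fun j _ => by rw [smul_smul, mul_comm]
          _ = f i := by
              rw [hinv]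
              simp [Matrix.one_apply, ite_smul]
      rw [← hfi]
      exact Submodule.sum_mem _ fun j _ =>
        Submodule.smul_mem _ _ (Submodule.subset_span ⟨j, rfl⟩)
    rw [eq_top_iff, ← f.span_eq]
    rw [Submodule.span_le]
    rintro x ⟨i, rfl⟩
    exact hfmem i
  · -- span = ⊤ → equality
    intro hspan
    by_contra hne
    have hd : (∑ i, dg i) - (∑ i, df i) ≠ 0 := by omega
    let b : Module.Basis (Fin r) A M := Module.Basis.mk hind (by rw [hspan])
    have hb : ⇑b = g := Module.Basis.coe_mk hind _
    have hinvC : Invertible (f.toMatrix ⇑b) := f.invertibleToMatrix b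
    rw [hb] at hinvC
    have hCu : IsUnit C.det := @Matrix.isUnit_det_of_invertible _ _ _ _ _ C hinvC
    exact hunit_deg _ hd _ (hdetmem h1) hCu
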